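/- Let F be a maximum matching of a graph G, K = E(G)\F, and let (Q, R, S) be a Gallai–Edmonds decomposition with components H_i (i ∈ I) of G − S and uncovered-in-H_i vertices r_i. Then every vertex that is evenly K-reachable from some vertex not covered by F lies in ⋃_{i∈I} V(H_i); that is, ER(K,F) ⊆ ⋃_{i∈I} V(H_i). -/

import Mathlib

variable {V : Type*}

/-- A matching: a set of non-loop edges that are pairwise vertex-disjoint. -/
def IsMatching (M : Set (Sym2 V)) : Prop :=
  (∀ e ∈ M, ¬ e.IsDiag) ∧ ∀ e ∈ M, ∀ f ∈ M, e ≠ f → ∀ v, v ∈ e → v ∉ f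

/-- A vertex is covered by an edge set if it belongs to some edge. -/
def covered (M : Set (Sym2 V)) (v : V) : Prop := ∃ e ∈ M, v ∈ e

/-- A `K`–`F`-alternating path: a (simple) nonempty list of vertices whose
odd-numbered edges (0-indexed: even positions) lie in `K` and even-numbered edges lie in `F`. -/
def AltPath (K F : Set (Sym2 V)) (p : List V) : Prop :=
  p ≠ [] ∧ p.Nodup ∧ ∀ i, ∀ h : i + 1 < p.length,
    s(p[i]'(Nat.lt_of_succ_lt h), p[i+1]'h) ∈ (if i % 2 = 0 then K else F)


/-- `x` is evenly `K`-reachable from `a`: there is a `K`–`F`-alternating path from `a` to `x`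
with an even number of edges (an odd number of vertices); `x = a` via the empty path. -/
def evenReach (K F : Set (Sym2 V)) (a x : V) : Prop :=
  ∃ (p : List V) (hp : p ≠ []), AltPath K F p ∧ p.head hp = a ∧ p.getLast hp = x ∧
    Odd p.length

/-- `x` is oddly `K`-reachable from `a`: there is a `K`–`F`-alternating path from `a` to `x`
with an odd number of edges (an even, positive, number of vertices). -/
def oddReach (K F : Set (Sym2 V)) (a x : V) : Prop :=
  ∃ (p : List V) (hp : p ≠ []), AltPath K F p ∧ p.head hp = a ∧ p.getLast hp = x ∧
    Even p.length


/-- A maximum matching of the graph with edge set `E`. -/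
def IsMaxMatching (E F : Set (Sym2 V)) : Prop :=
  F ⊆ E ∧ IsMatching F ∧ ∀ M ⊆ E, IsMatching M → M.ncard ≤ F.ncard

/-- The edges of `F` contained in the vertex set `C` (the induced edge set `F[C]`). -/
def edgesIn (F : Set (Sym2 V)) (C : Set V) : Set (Sym2 V) := {e ∈ F | ∀ u ∈ e, u ∈ C}

/-- The edges of `E` avoiding the vertex set `S` (edges of `G − S`). -/
def avoid (E : Set (Sym2 V)) (S : Set V) : Set (Sym2 V) := {e ∈ E | ∀ u ∈ e, u ∉ S}

/-- The connected component of `v` in the graph with edge set `E'`. -/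
def comp (E' : Set (Sym2 V)) (v : V) : Set V :=
  {u | Relation.ReflTransGen (fun a b => s(a, b) ∈ E') v u}

/-- The induced subgraph on `C` is hypomatchable (factor-critical): for every `v ∈ C` there
is a matching inside `C` covering exactly `C \ {v}`. -/
def Hypomatchable (E : Set (Sym2 V)) (C : Set V) : Prop :=
  ∀ v ∈ C, ∃ M ⊆ edgesIn E C, IsMatching M ∧ ¬ covered M v ∧
    ∀ u ∈ C, u ≠ v → covered M u

/-- A Gallai–Edmonds decomposition `(Q, R, S)` of the graph `E` with respect to the maximum
matching `F`: (1) `F[Q]` is a perfect matching of `Q`; (2) `R` is a union of connected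
components of `G − S`, each hypomatchable and matched by `F` within itself except for exactly
one exposed vertex (its `r_i`); (3) every `s ∈ S` is matched by `F` to the exposed vertex
`r_i` of some component. -/
def IsGE (E F : Set (Sym2 V)) (Q R S : Set V) : Prop :=
  Q ∪ R ∪ S = Set.univ ∧ Disjoint Q R ∧ Disjoint Q S ∧ Disjoint R S ∧
  (∀ v ∈ Q, covered (edgesIn F Q) v) ∧
  (∀ v ∈ R, comp (avoid E S) v ⊆ R ∧ Hypomatchable E (comp (avoid E S) v) ∧
    (∃! w, w ∈ comp (avoid E S) v ∧ ¬ covered (edgesIn F (comp (avoid E S) v)) w)) ∧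
  (∀ s ∈ S, ∃ t, s(s, t) ∈ F ∧ t ∈ R ∧ ¬ covered (edgesIn F (comp (avoid E S) t)) t)

/-- `ER(K,F)`: the set of vertices evenly `K`-reachable from some `F`-uncovered vertex. -/
def ERset (K F : Set (Sym2 V)) : Set V := {x | ∃ a, ¬ covered F a ∧ evenReach K F a x}

/-- `OR(K,F)`: the set of vertices oddly `K`-reachable from some `F`-uncovered vertex. -/
def ORset (K F : Set (Sym2 V)) : Set V := {x | ∃ a, ¬ covered F a ∧ oddReach K F a x}

lemma matching_subset' {V : Type*} {M N : Set (Sym2 V)} (h : N ⊆ M) (hM : IsMatching M) : IsMatching N :=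
  ⟨fun e he => hM.1 e (h he), fun e he f hf => hM.2 e (h he) f (h hf)⟩

lemma cov_card {V : Type*} [Finite V] (M : Set (Sym2 V)) (hM : IsMatching M) :
    {v | covered M v}.ncard = 2 * M.ncard := by
  have hfin : M.Finite := Set.toFinite M
  refine Set.Finite.induction_on
    (motive := fun M _ => IsMatching M → {v | covered M v}.ncard = 2 * M.ncard) M hfin ?_ ?_ hM
  · intro _; simp [covered]
  · rintro e M henM hMfin ih hM
    have hM' : IsMatching M := matching_subset' (Set.subset_insert _ _) hM
    have hset : {v | covered (insert e M) v} = {v | v ∈ e} ∪ {v | covered M v} := by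
      ext v; simp [covered, or_and_right, exists_or]
    have hdisj : Disjoint {v | v ∈ e} {v | covered M v} := by
      rw [Set.disjoint_left]
      rintro v hv ⟨f, hf, hvf⟩
      exact hM.2 e (Set.mem_insert _ _) f (Set.mem_insert_of_mem _ hf)
        (fun h => henM (h ▸ hf)) v hv hvf
    have he2 : {v | v ∈ e}.ncard = 2 := by
      obtain ⟨x, y⟩ := e
      have hxy : x ≠ y := by
        have := hM.1 _ (Set.mem_insert _ _); simpa using this
      have : {v | v ∈ s(x,y)} = {x, y} := by ext v; simp [Sym2.mem_iff]
      rw [this, Set.ncard_pair hxy]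
    rw [hset, Set.ncard_union_eq hdisj, he2, ih hM',
      Set.ncard_insert_of_notMem henM hMfin]
    ring

lemma mem_comp_self {V : Type*} (E' : Set (Sym2 V)) (v : V) : v ∈ comp E' v :=
  Relation.ReflTransGen.refl

lemma mem_comp_of_adj {V : Type*} {E' : Set (Sym2 V)} {u w : V} (h : s(u, w) ∈ E') :
    w ∈ comp E' u := Relation.ReflTransGen.single h

lemma comp_eq_of_mem {V : Type*} {E' : Set (Sym2 V)} {u v : V} (h : u ∈ comp E' v) :
    comp E' u = comp E' v := by
  have hsym : Symmetric (fun a b : V => s(a, b) ∈ E') := by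
    intro a b hab; rwa [Sym2.eq_swap] at hab
  have hS : Symmetric (Relation.ReflTransGen (fun a b : V => s(a, b) ∈ E')) :=
    fun a b h => @Std.Symm.symm _ _ (@Relation.ReflTransGen.stdSymm _ _ ⟨hsym⟩) a b h
  ext w
  exact ⟨fun hw => Relation.ReflTransGen.trans h hw,
    fun hw => Relation.ReflTransGen.trans (hS h) hw⟩

lemma matching_partner {V : Type*} {M : Set (Sym2 V)} (hM : IsMatching M) {u t1 t2 : V}
    (h1 : s(u, t1) ∈ M) (h2 : s(u, t2) ∈ M) : t1 = t2 := by
  by_cases he : s(u, t1) = s(u, t2)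
  · rw [Sym2.eq_iff] at he
    rcases he with ⟨-, h⟩ | ⟨h, h'⟩
    · exact h
    · rw [← h, h']
  · exact absurd (by simp) (hM.2 _ h1 _ h2 he u (by simp))


lemma flipPath {V : Type*} [Finite V] (E : Set (Sym2 V)) :
    ∀ (n : ℕ) (F : Set (Sym2 V)) (p : List V) (hp : p ≠ []), p.length ≤ n → F ⊆ E →
    IsMatching F → AltPath (E \ F) F p → ¬ covered F (p.head hp) → Odd p.length →
    ∃ M, M ⊆ E ∧ IsMatching M ∧ M.ncard = F.ncard ∧ ¬ covered M (p.getLast hp) := by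
  intro n
  induction n with
  | zero =>
    intro F p hp hlen
    rw [Nat.le_zero, List.length_eq_zero_iff] at hlen
    exact absurd hlen hp
  | succ n ih =>
    intro F p hp hlen hFE hFm halt hhead hodd
    match p, hp with
    | [a], _ =>
      exact ⟨F, hFE, hFm, rfl, by simpa using hhead⟩
    | [a, b], _ => rcases hodd with ⟨k, hk⟩; simp at hk
    | a :: b :: c :: r, _ =>
      have hqne : (c :: r : List V) ≠ [] := by simp
      have hnd : (a :: b :: c :: r).Nodup := halt.2.1
      have hedge := halt.2.2
      have hab : s(a, b) ∈ E \ F := by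
        have := hedge 0 (by simp); simpa using this
      have hbc : s(b, c) ∈ F := by
        have := hedge 1 (by simp); simpa using this
      have hne_ab : a ≠ b := by simp at hnd; tauto
      have hne_bc : b ≠ c := by simp at hnd; tauto
      have hne_ac : a ≠ c := by simp at hnd; tauto
      set F1 : Set (Sym2 V) := insert (s(a, b)) (F \ {s(b, c)}) with hF1
      have haF : ∀ e ∈ F, a ∉ e := by
        intro e he hae; exact hhead ⟨e, he, by simpa using hae⟩
      have hbF : ∀ e ∈ F, b ∈ e → e = s(b, c) := by
        intro e he hbe
        by_contra hne
        exact hFm.2 e he (s(b,c)) hbc hne b hbe (by simp)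
      have hF1E : F1 ⊆ E := by
        rintro e (rfl | ⟨he, -⟩); exacts [hab.1, hFE he]
      have hF1m : IsMatching F1 := by
        constructor
        · rintro e (rfl | ⟨he, -⟩)
          · simp [hne_ab]
          · exact hFm.1 e he
        · rintro e (rfl | ⟨he, hne⟩) f (rfl | ⟨hf, hnf⟩) hef v hv
          · exact absurd rfl hef
          · intro hvf
            rcases Sym2.mem_iff.mp hv with rfl | rfl
            · exact haF f hf hvf
            · rw [hbF f hf hvf] at hnf; simp at hnf
          · intro hvf
            rcases Sym2.mem_iff.mp hvf with rfl | rfl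
            · exact haF e he hv
            · rw [hbF e he hv] at hne; simp at hne
          · exact hFm.2 e he f hf hef v hv
      have habnF : s(a, b) ∉ F \ {s(b,c)} := fun h => hab.2 h.1
      have hcard : F1.ncard = F.ncard := by
        rw [hF1, Set.ncard_insert_of_notMem habnF (Set.toFinite _),
          Set.ncard_diff_singleton_of_mem hbc]
        have : 0 < F.ncard := (Set.ncard_pos (Set.toFinite _)).mpr ⟨_, hbc⟩
        omega
      have hnodup_ne : ∀ (j k : ℕ) (hj : j < (a::b::c::r).length)
          (hk : k < (a::b::c::r).length), j ≠ k →
          (a::b::c::r)[j] ≠ (a::b::c::r)[k] := by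
        intro j k hj hk hjk; simp [hnd.getElem_inj_iff, hjk]
      have hqalt : AltPath (E \ F1) F1 (c :: r) := by
        refine ⟨hqne, ?_, ?_⟩
        · simp at hnd ⊢; tauto
        · intro i hilen
          have hi2 : i + 2 + 1 < (a :: b :: c :: r).length := by
            simp at hilen ⊢; omega
          have horig := hedge (i + 2) hi2
          have hmod : (i + 2) % 2 = i % 2 := by omega
          rw [hmod] at horig
          have hgq : ∀ (j : ℕ) (hj : j < (c :: r).length),
              (c :: r)[j] = (a :: b :: c :: r)[j + 2]'(by simp at hj ⊢; omega) := by
            intro j hj; rfl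
          simp only [List.length_cons] at hilen
          rw [hgq i (by simp; omega), hgq (i+1) (by simp; omega)]
          by_cases hpar : i % 2 = 0
          · rw [if_pos hpar] at horig ⊢
            refine ⟨horig.1, ?_⟩
            rintro (heq | ⟨hmem, -⟩)
            · rw [Sym2.eq_iff] at heq
              rcases heq with ⟨h1, -⟩ | ⟨h1, -⟩
              · exact hnodup_ne (i+2) 0 (by simp; omega) (by simp) (by omega) h1
              · exact hnodup_ne (i+2) 1 (by simp; omega) (by simp) (by omega) h1
            · exact horig.2 hmem
          · rw [if_neg hpar] at horig ⊢
            refine Set.mem_insert_of_mem _ ⟨horig, ?_⟩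
            simp only [Set.mem_singleton_iff, Sym2.eq_iff]
            have h12 : ((a::b::c::r))[1] = b := rfl
            have h22 : ((a::b::c::r))[2] = c := rfl
            rintro (⟨h1, -⟩ | ⟨h1, h2⟩)
            · rw [← h12] at h1
              exact hnodup_ne (i+2) 1 (by simp; omega) (by simp) (by omega) h1
            · rw [← h22] at h1
              exact hnodup_ne (i+2) 2 (by simp; omega) (by simp) (by omega) h1
      have hqhead : ¬ covered F1 ((c :: r).head hqne) := by
        simp only [List.head_cons]
        rintro ⟨e, (rfl | ⟨he, hnotbc⟩), hce⟩
        · rcases Sym2.mem_iff.mp hce with rfl | rfl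
          · exact hne_ac rfl
          · exact hne_bc rfl
        · apply hnotbc
          simp only [Set.mem_singleton_iff]
          by_contra hne
          exact hFm.2 e he (s(b,c)) hbc hne c hce (by simp)
      have hqlen : (c :: r).length ≤ n := by simp at hlen ⊢; omega
      have hqodd : Odd (c :: r).length := by
        rcases hodd with ⟨k, hk⟩
        refine ⟨k - 1, ?_⟩
        simp at hk ⊢; omega
      obtain ⟨M, hME, hMm, hMcard, hMlast⟩ := ih F1 (c :: r) hqne hqlen hF1E hF1m hqalt hqhead hqodd
      refine ⟨M, hME, hMm, hMcard.trans hcard, ?_⟩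
      have hlast : (a :: b :: c :: r).getLast (by simp) = (c :: r).getLast hqne := by
        simp [List.getLast_cons]
      rwa [hlast]

lemma counting {V : Type*} [Finite V] (E F : Set (Sym2 V)) (Q R S : Set V)
    (hFE : F ⊆ E) (hFm : IsMatching F) (hGE : IsGE E F Q R S)
    (M : Set (Sym2 V)) (hME : M ⊆ E) (hMm : IsMatching M) (hcard : M.ncard = F.ncard)
    (x : V) (hx : ¬ covered M x) (hxQS : x ∈ Q ∪ S) : False := by
  classical
  obtain ⟨huniv, hQR, hQS, hRS, hQcov, hRcomp, hScov⟩ := hGE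
  set cp : V → Set V := fun v => comp (avoid E S) v with hcp
  set UF : Set V := {v | ¬ covered F v} with hUF
  set UM : Set V := {v | ¬ covered M v} with hUM
  set 𝒞 : Set (Set V) := cp '' R with h𝒞
  have hSmatched : ∀ s ∈ S, covered F s := by
    intro s hs
    obtain ⟨t, ht, -, -⟩ := hScov s hs
    exact ⟨_, ht, by simp⟩
  have hUFR : UF ⊆ R := by
    intro u hu
    have : u ∈ Q ∪ R ∪ S := huniv ▸ Set.mem_univ u
    rcases this with (hQ | hR) | hS
    · obtain ⟨e, ⟨heF, -⟩, hue⟩ := hQcov u hQ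
      exact absurd ⟨e, heF, hue⟩ hu
    · exact hR
    · exact absurd (hSmatched u hS) hu
  have huniq : ∀ z ∈ R, ∀ w1 w2, (w1 ∈ cp z ∧ ¬ covered (edgesIn F (cp z)) w1) →
      (w2 ∈ cp z ∧ ¬ covered (edgesIn F (cp z)) w2) → w1 = w2 := by
    intro z hz w1 w2 h1 h2
    obtain ⟨w, -, hwu⟩ := (hRcomp z hz).2.2
    rw [hwu w1 h1, hwu w2 h2]
  -- Part 1 : 𝒞.ncard = UF.ncard + S.ncard
  set f : V → Set V := fun u => if hu : u ∈ S then cp ((hScov u hu).choose) else cp u with hf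
  have hkey : ∀ u ∈ UF ∪ S, ∃ z, z ∈ R ∧ f u = cp z ∧
      (z ∈ cp z ∧ ¬ covered (edgesIn F (cp z)) z) ∧
      (u ∈ S → s(u, z) ∈ F) ∧ (u ∉ S → z = u) := by
    rintro u hu
    by_cases hS : u ∈ S
    · obtain ⟨ht1, ht2, ht3⟩ := (hScov u hS).choose_spec
      refine ⟨_, ht2, by simp [hf, hS], ⟨mem_comp_self _ _, ht3⟩, fun _ => ht1, fun h => absurd hS h⟩
    · have huF : u ∈ UF := hu.resolve_right hS
      refine ⟨u, hUFR huF, by simp [hf, hS], ⟨mem_comp_self _ _, ?_⟩, fun h => absurd h hS, fun _ => rfl⟩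
      rintro ⟨e, ⟨heF, -⟩, hue⟩
      exact huF ⟨e, heF, hue⟩
  have hfinj : Set.InjOn f (UF ∪ S) := by
    intro u1 hu1 u2 hu2 hfeq
    obtain ⟨z1, hz1R, hfz1, hexpo1, hS1, hnS1⟩ := hkey u1 hu1
    obtain ⟨z2, hz2R, hfz2, hexpo2, hS2, hnS2⟩ := hkey u2 hu2
    have hcpeq : cp z1 = cp z2 := by rw [← hfz1, ← hfz2, hfeq]
    have hz12 : z1 = z2 := by
      refine huniq z1 hz1R z1 z2 hexpo1 ?_
      rw [hcpeq]; exact hexpo2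
    subst hz12
    by_cases h1 : u1 ∈ S <;> by_cases h2 : u2 ∈ S
    · have e1 : s(z1, u1) ∈ F := by rw [Sym2.eq_swap]; exact hS1 h1
      have e2 : s(z1, u2) ∈ F := by rw [Sym2.eq_swap]; exact hS2 h2
      exact matching_partner hFm e1 e2
    · exfalso
      have : u2 ∈ UF := hu2.resolve_right h2
      have hz1u2 : z1 = u2 := hnS2 h2
      exact this ⟨s(u1, z1), hS1 h1, by rw [hz1u2]; simp⟩
    · exfalso
      have : u1 ∈ UF := hu1.resolve_right h1
      have hz1u1 : z1 = u1 := hnS1 h1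
      exact this ⟨s(u2, z1), hS2 h2, by rw [hz1u1]; simp⟩
    · rw [← hnS1 h1, ← hnS2 h2]
  have hfimg : f '' (UF ∪ S) = 𝒞 := by
    apply Set.Subset.antisymm
    · rintro _ ⟨u, hu, rfl⟩
      obtain ⟨z, hzR, hfz, -, -, -⟩ := hkey u hu
      exact ⟨z, hzR, hfz.symm⟩
    · rintro _ ⟨v, hvR, rfl⟩
      obtain ⟨hsubR, hhypo, hexu⟩ := hRcomp v hvR
      obtain ⟨r, ⟨hrC, hrexp⟩, -⟩ := hexu
      have hcpr : cp r = cp v := comp_eq_of_mem hrC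
      have hrR : r ∈ R := hsubR hrC
      have hrnS : r ∉ S := fun h => Set.disjoint_left.mp hRS hrR h
      by_cases hrcov : covered F r
      · obtain ⟨e, heF, hre⟩ := hrcov
        obtain ⟨y, rfl⟩ := Sym2.mem_iff_exists.mp hre
        have hyS : y ∈ S := by
          by_contra hyS
          have heav : s(r, y) ∈ avoid E S := by
            refine ⟨hFE heF, ?_⟩
            intro u hu
            rcases Sym2.mem_iff.mp hu with rfl | rfl
            exacts [hrnS, hyS]
          have hyC : y ∈ cp v := by
            rw [← hcpr]; exact mem_comp_of_adj heav
          refine hrexp ⟨s(r, y), ⟨heF, ?_⟩, by simp⟩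
          intro u hu
          rcases Sym2.mem_iff.mp hu with rfl | rfl
          exacts [hrC, hyC]
        refine ⟨y, Or.inr hyS, ?_⟩
        obtain ⟨z, hzR, hfz, -, hSz, -⟩ := hkey y (Or.inr hyS)
        have hzy : s(y, z) ∈ F := hSz hyS
        have hyr : s(y, r) ∈ F := by rwa [Sym2.eq_swap] at heF
        have : z = r := matching_partner hFm hzy hyr
        rw [hfz, this, hcpr]
      · have hrUF : r ∈ UF := hrcov
        refine ⟨r, Or.inl hrUF, ?_⟩
        obtain ⟨z, -, hfz, -, -, hnSz⟩ := hkey r (Or.inl hrUF)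
        rw [hfz, hnSz hrnS, hcpr]
  have hdisjUFS : Disjoint UF S := by
    rw [Set.disjoint_left]
    intro u hu huS
    exact hu (hSmatched u huS)
  have hcount1 : 𝒞.ncard = UF.ncard + S.ncard := by
    rw [← hfimg, Set.ncard_image_of_injOn hfinj, Set.ncard_union_eq hdisjUFS]
  -- Part 2
  have hcross : ∀ v ∈ R, (∀ w ∈ cp v, covered M w) →
      ∃ y, y ∈ S ∧ ∃ u, u ∈ cp v ∧ s(u, y) ∈ M := by
    intro v hvR hall
    by_contra hno
    push_neg at hno
    have hclosed : ∀ e ∈ M, ∀ u ∈ e, u ∈ cp v → ∀ w ∈ e, w ∈ cp v := by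
      intro e he u hue hucp w hwe
      obtain ⟨y, rfl⟩ := Sym2.mem_iff_exists.mp hue
      rcases Sym2.mem_iff.mp hwe with rfl | rfl
      · exact hucp
      · by_cases hyS : w ∈ S
        · exact absurd he (hno w hyS u hucp)
        · have heav : s(u, w) ∈ avoid E S := by
            refine ⟨hME he, ?_⟩
            intro a ha
            rcases Sym2.mem_iff.mp ha with rfl | rfl
            · exact fun h => Set.disjoint_left.mp hRS ((hRcomp v hvR).1 hucp) h
            · exact hyS
          have := mem_comp_of_adj heav
          rwa [comp_eq_of_mem hucp] at this
    have hMC : {w | covered (edgesIn M (cp v)) w} = cp v := by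
      ext w
      constructor
      · rintro ⟨e, ⟨-, hin⟩, hwe⟩
        exact hin w hwe
      · intro hw
        obtain ⟨e, he, hwe⟩ := hall w hw
        exact ⟨e, ⟨he, hclosed e he w hwe hw⟩, hwe⟩
    have hMCm : IsMatching (edgesIn M (cp v)) :=
      matching_subset' (fun e he => he.1) hMm
    have hc1 : (cp v).ncard = 2 * (edgesIn M (cp v)).ncard := by
      have := cov_card _ hMCm
      rwa [hMC] at this
    obtain ⟨M', hM'sub, hM'm, hM'v, hM'cov⟩ := (hRcomp v hvR).2.1 v (mem_comp_self _ _)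
    have hM'set : {w | covered M' w} = cp v \ {v} := by
      ext w
      constructor
      · rintro ⟨e, he, hwe⟩
        have hwC : w ∈ cp v := (hM'sub he).2 w hwe
        refine ⟨hwC, ?_⟩
        rintro rfl
        exact hM'v ⟨e, he, hwe⟩
      · rintro ⟨hwC, hwv⟩
        exact hM'cov w hwC (by simpa using hwv)
    have hc2 : (cp v \ {v}).ncard = 2 * M'.ncard := by
      have := cov_card _ hM'm
      rwa [hM'set] at this
    have hvC : v ∈ cp v := mem_comp_self _ _
    have hc3 : (cp v \ {v}).ncard = (cp v).ncard - 1 :=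
      Set.ncard_diff_singleton_of_mem hvC
    have hc4 : 0 < (cp v).ncard := (Set.ncard_pos (Set.toFinite _)).mpr ⟨v, hvC⟩
    omega
  set g : Set V → V := fun C =>
    if h1 : ∃ w, w ∈ C ∧ ¬ covered M w then h1.choose
    else if h2 : ∃ y, y ∈ S ∧ ∃ u, u ∈ C ∧ s(u, y) ∈ M then h2.choose else x with hg
  have hgkey : ∀ C ∈ 𝒞, (g C ∈ C ∧ ¬ covered M (g C) ∧ C ⊆ R) ∨
      (g C ∈ S ∧ covered M (g C) ∧ ∃ u, u ∈ C ∧ s(u, g C) ∈ M) := by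
    rintro _ ⟨v, hvR, rfl⟩
    by_cases h1 : ∃ w, w ∈ cp v ∧ ¬ covered M w
    · left
      have hspec := h1.choose_spec
      rw [hg]; simp only [dif_pos h1]
      exact ⟨hspec.1, hspec.2, (hRcomp v hvR).1⟩
    · right
      have hall : ∀ w ∈ cp v, covered M w := by
        intro w hw; by_contra hc; exact h1 ⟨w, hw, hc⟩
      have h2 : ∃ y, y ∈ S ∧ ∃ u, u ∈ cp v ∧ s(u, y) ∈ M := hcross v hvR hall
      have hspec := h2.choose_spec
      rw [hg]; simp only [dif_neg h1, dif_pos h2]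
      obtain ⟨hyS, u, huC, hue⟩ := hspec
      exact ⟨hyS, ⟨s(u, _), hue, by simp⟩, u, huC, hue⟩
  have cp_eq : ∀ {u w : V}, u ∈ cp w → cp u = cp w := fun h => comp_eq_of_mem h
  have hginj : Set.InjOn g 𝒞 := by
    intro C1 hC1 C2 hC2 hgeq
    rcases hgkey C1 hC1 with ⟨hm1, hu1, -⟩ | ⟨hS1, hc1, u1, hu1C, hu1e⟩ <;>
      rcases hgkey C2 hC2 with ⟨hm2, hu2, -⟩ | ⟨hS2, hc2, u2, hu2C, hu2e⟩
    · obtain ⟨v1, hv1, rfl⟩ := hC1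
      obtain ⟨v2, hv2, rfl⟩ := hC2
      rw [← cp_eq hm1, hgeq, cp_eq hm2]
    · exact absurd hc2 (hgeq ▸ hu1)
    · exact absurd hc1 (hgeq ▸ hu2)
    · obtain ⟨v1, hv1, rfl⟩ := hC1
      obtain ⟨v2, hv2, rfl⟩ := hC2
      have e1 : s(g (cp v1), u1) ∈ M := by rw [Sym2.eq_swap]; exact hu1e
      have e2 : s(g (cp v1), u2) ∈ M := by rw [Sym2.eq_swap, hgeq]; exact hu2e
      have : u1 = u2 := matching_partner hMm e1 e2
      rw [← cp_eq hu1C, this, cp_eq hu2C]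
  have hximg : g '' 𝒞 ⊆ (UM \ {x}) ∪ (S \ {x}) := by
    rintro _ ⟨C, hC, rfl⟩
    rcases hgkey C hC with ⟨hm, hu, hCR⟩ | ⟨hS', hc, -⟩
    · left
      refine ⟨hu, ?_⟩
      intro heq
      have : g C ∈ R := hCR hm
      rcases hxQS with hQ | hS''
      · exact Set.disjoint_left.mp hQR (heq ▸ hQ) this
      · exact Set.disjoint_left.mp hRS this (heq ▸ hS'')
    · right
      refine ⟨hS', ?_⟩
      intro heq
      exact hx (heq ▸ hc)
  -- cardinality computations
  have hcovMcard : {v | covered M v}.ncard = 2 * M.ncard := cov_card M hMm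
  have hcovFcard : {v | covered F v}.ncard = 2 * F.ncard := cov_card F hFm
  have hUMcompl : UM = {v | covered M v}ᶜ := by ext v; simp [hUM]
  have hUFcompl : UF = {v | covered F v}ᶜ := by ext v; simp [hUF]
  have h1 : {v | covered M v}.ncard + UM.ncard = Nat.card V := by
    rw [hUMcompl]; exact Set.ncard_add_ncard_compl _
  have h2 : {v | covered F v}.ncard + UF.ncard = Nat.card V := by
    rw [hUFcompl]; exact Set.ncard_add_ncard_compl _
  have hUMF : UM.ncard = UF.ncard := by omega
  have hxUM : x ∈ UM := hx
  have hUMpos : 0 < UM.ncard := (Set.ncard_pos (Set.toFinite _)).mpr ⟨x, hxUM⟩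
  have hle1 : 𝒞.ncard ≤ (UM \ {x}).ncard + (S \ {x}).ncard := by
    calc 𝒞.ncard = (g '' 𝒞).ncard := (Set.ncard_image_of_injOn hginj).symm
    _ ≤ ((UM \ {x}) ∪ (S \ {x})).ncard := Set.ncard_le_ncard hximg (Set.toFinite _)
    _ ≤ (UM \ {x}).ncard + (S \ {x}).ncard := Set.ncard_union_le _ _
  have hd1 : (UM \ {x}).ncard = UM.ncard - 1 :=
    Set.ncard_diff_singleton_of_mem hxUM
  have hd2 : (S \ {x}).ncard ≤ S.ncard :=
    Set.ncard_le_ncard Set.diff_subset (Set.toFinite _)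
  omega

/-- given a Gallai–Edmonds decomposition `(Q,R,S)` for a maximum matching `F`
and `K = E \ F`, every evenly `K`-reachable vertex lies in `⋃ V(H_i) = R`. -/
theorem stmt_11 {V : Type*} [Fintype V] (E F : Set (Sym2 V)) (Q R S : Set V)
    (hE : ∀ e ∈ E, ¬ e.IsDiag) (hF : IsMaxMatching E F) (hGE : IsGE E F Q R S) :
    ERset (E \ F) F ⊆ R := by
  classical
  intro x hxER
  obtain ⟨a, ha, p, hp, halt, hhead, hlast, hodd⟩ := hxER
  have hhead' : ¬ covered F (p.head hp) := by rwa [hhead]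
  obtain ⟨M, hME, hMm, hMcard, hMlast⟩ :=
    flipPath E p.length F p hp le_rfl hF.1 hF.2.1 halt hhead' hodd
  by_contra hxR
  have hxQS : x ∈ Q ∪ S := by
    have hxu : x ∈ Q ∪ R ∪ S := hGE.1 ▸ Set.mem_univ x
    rcases hxu with (hQ | hR) | hS
    · exact Or.inl hQ
    · exact absurd hR hxR
    · exact Or.inr hS
  exact counting E F Q R S hF.1 hF.2.1 hGE M hME hMm hMcard x (hlast ▸ hMlast) hxQS
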